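/- arXiv:1203.6168 — 3 statements merged into one kernel-verified Lean document; each statement's English description precedes it below -/
import Mathlib

section
/- Let Γ be a group, Γ₀ ≤ Γ a subgroup of finite index, and t : Γ/Γ₀ → Γ a transversal (a function with t(c)Γ₀ = c for every coset c). Given a group homomorphism ρ : Γ₀ → U(n), define for each g ∈ Γ the square complex matrix Ind(ρ)(g) indexed by (Γ/Γ₀) × Fin n, whose entry at ((c,i),(d,j)) is ρ(t(c)⁻¹ g t(d))_{ij} if t(c)⁻¹ g t(d) ∈ Γ₀ and 0 otherwise. Then each Ind(ρ)(g) is a unitary matrix and g ↦ Ind(ρ)(g) is a group homomorphism from Γ to the unitary group of matrices indexed by (Γ/Γ₀) × Fin n. -/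
/-- The induced representation matrix: given a subgroup `Γ₀ ≤ Γ`, a transversal
`t : Γ/Γ₀ → Γ`, and a unitary representation `ρ : Γ₀ → U(n)`, the matrix of
`Ind(ρ)(g)`, indexed by `(Γ/Γ₀) × Fin n`, has `((c,i),(d,j))` entry
`ρ(t(c)⁻¹ g t(d))_{ij}` when `t(c)⁻¹ g t(d) ∈ Γ₀` and `0` otherwise. -/
def inducedRep {Γ : Type*} [Group Γ] (Γ₀ : Subgroup Γ) [DecidablePred (· ∈ Γ₀)]
    (t : Γ ⧸ Γ₀ → Γ) {n : ℕ} (ρ : Γ₀ →* Matrix.unitaryGroup (Fin n) ℂ) (g : Γ) :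
    Matrix ((Γ ⧸ Γ₀) × Fin n) ((Γ ⧸ Γ₀) × Fin n) ℂ :=
  fun p q =>
    if h : (t p.1)⁻¹ * g * t q.1 ∈ Γ₀ then
      (ρ ⟨(t p.1)⁻¹ * g * t q.1, h⟩ : Matrix (Fin n) (Fin n) ℂ) p.2 q.2
    else 0

set_option linter.unusedSectionVars false

section aux
variable {Γ : Type*} [Group Γ] (Γ₀ : Subgroup Γ) [DecidablePred (· ∈ Γ₀)]
  [Fintype (Γ ⧸ Γ₀)] [DecidableEq (Γ ⧸ Γ₀)]
  (t : Γ ⧸ Γ₀ → Γ) (ht : ∀ c : Γ ⧸ Γ₀, QuotientGroup.mk (t c) = c)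
  {n : ℕ} (ρ : Γ₀ →* Matrix.unitaryGroup (Fin n) ℂ)

include ht

lemma inducedRep_one : inducedRep Γ₀ t ρ 1 = 1 := by
  ext ⟨c, i⟩ ⟨d, j⟩
  simp only [inducedRep, Matrix.one_apply, Prod.mk.injEq]
  by_cases hcd : c = d
  · subst hcd
    have hmem : (t c)⁻¹ * 1 * t c ∈ Γ₀ := by simpa using Γ₀.one_mem
    rw [dif_pos hmem]
    have : (⟨(t c)⁻¹ * 1 * t c, hmem⟩ : Γ₀) = 1 := by ext; simp
    rw [this, map_one]
    simp [Matrix.one_apply]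
  · have : ¬ ((t c)⁻¹ * 1 * t d ∈ Γ₀) := by
      intro hmem
      apply hcd
      have : QuotientGroup.mk (t c) = (QuotientGroup.mk (t d) : Γ ⧸ Γ₀) :=
        (QuotientGroup.eq).mpr (by simpa using hmem)
      rwa [ht, ht] at this
    rw [dif_neg this, if_neg (by simp [hcd])]

lemma inducedRep_mul (g h : Γ) :
    inducedRep Γ₀ t ρ (g * h) = inducedRep Γ₀ t ρ g * inducedRep Γ₀ t ρ h := by
  ext ⟨c, i⟩ ⟨e, k⟩
  rw [Matrix.mul_apply, Fintype.sum_prod_type]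
  set d₀ : Γ ⧸ Γ₀ := QuotientGroup.mk (g⁻¹ * t c) with hd₀
  have hmem : (t c)⁻¹ * g * t d₀ ∈ Γ₀ := by
    have h1 : (QuotientGroup.mk (t d₀) : Γ ⧸ Γ₀) = QuotientGroup.mk (g⁻¹ * t c) := ht d₀
    have h2 := (QuotientGroup.eq).mp h1
    have := Γ₀.inv_mem h2
    simpa [mul_assoc] using this
  rw [Finset.sum_eq_single d₀]
  · by_cases hghe : (t c)⁻¹ * (g * h) * t e ∈ Γ₀
    · have hb : (t d₀)⁻¹ * h * t e ∈ Γ₀ := by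
        have := Γ₀.mul_mem (Γ₀.inv_mem hmem) hghe
        have heq : ((t c)⁻¹ * g * t d₀)⁻¹ * ((t c)⁻¹ * (g * h) * t e)
            = (t d₀)⁻¹ * h * t e := by group
        rwa [heq] at this
      have key : (⟨(t c)⁻¹ * (g * h) * t e, hghe⟩ : Γ₀)
          = ⟨(t c)⁻¹ * g * t d₀, hmem⟩ * ⟨(t d₀)⁻¹ * h * t e, hb⟩ := by
        ext; simp; group
      simp only [inducedRep, dif_pos hmem, dif_pos hb, dif_pos hghe]
      rw [key, map_mul]
      exact Matrix.mul_apply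
    · simp only [inducedRep, dif_neg hghe, dif_pos hmem]
      rw [Finset.sum_eq_zero]
      intro j _
      have hb : ¬ ((t d₀)⁻¹ * h * t e ∈ Γ₀) := by
        intro hb
        apply hghe
        have := Γ₀.mul_mem hmem hb
        have heq : ((t c)⁻¹ * g * t d₀) * ((t d₀)⁻¹ * h * t e)
            = (t c)⁻¹ * (g * h) * t e := by group
        rwa [heq] at this
      rw [dif_neg hb, mul_zero]
  · intro d _ hd
    rw [Finset.sum_eq_zero]
    intro j _
    have ha : ¬ ((t c)⁻¹ * g * t d ∈ Γ₀) := by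
      intro ha
      apply hd
      have : (QuotientGroup.mk (g⁻¹ * t c) : Γ ⧸ Γ₀) = QuotientGroup.mk (t d) :=
        (QuotientGroup.eq).mpr (by simpa [mul_assoc] using ha)
      rw [ht] at this
      exact this.symm
    simp only [inducedRep, dif_neg ha, zero_mul]
  · intro hnot
    exact absurd (Finset.mem_univ d₀) hnot

lemma inducedRep_star (g : Γ) :
    inducedRep Γ₀ t ρ g⁻¹ = star (inducedRep Γ₀ t ρ g) := by
  ext ⟨c, i⟩ ⟨d, j⟩
  rw [Matrix.star_apply]
  simp only [inducedRep]
  by_cases hm : (t c)⁻¹ * g⁻¹ * t d ∈ Γ₀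
  · have hm' : (t d)⁻¹ * g * t c ∈ Γ₀ := by
      have := Γ₀.inv_mem hm
      simpa [mul_assoc] using this
    rw [dif_pos hm, dif_pos hm']
    have key : (⟨(t c)⁻¹ * g⁻¹ * t d, hm⟩ : Γ₀) = (⟨(t d)⁻¹ * g * t c, hm'⟩ : Γ₀)⁻¹ := by
      ext; simp; group
    rw [key, map_inv]
    rw [Matrix.UnitaryGroup.inv_val]
    exact (Matrix.star_apply _ _ _).symm
  · have hm' : ¬ ((t d)⁻¹ * g * t c ∈ Γ₀) := by
      intro h
      apply hm
      have := Γ₀.inv_mem h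
      simpa [mul_assoc] using this
    rw [dif_neg hm, dif_neg hm', star_zero]

end aux

/-- For a finite-index subgroup `Γ₀ ≤ Γ` with transversal `t` and a unitary
representation `ρ : Γ₀ → U(n)`, each induced matrix `Ind(ρ)(g)` is unitary, and
`g ↦ Ind(ρ)(g)` is a group homomorphism into the unitary group of matrices
indexed by `(Γ/Γ₀) × Fin n`. -/
theorem inducedRep_unitary_monoidHom {Γ : Type*} [Group Γ] (Γ₀ : Subgroup Γ)
    [DecidablePred (· ∈ Γ₀)] [Fintype (Γ ⧸ Γ₀)] [DecidableEq (Γ ⧸ Γ₀)]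
    (t : Γ ⧸ Γ₀ → Γ) (ht : ∀ c : Γ ⧸ Γ₀, QuotientGroup.mk (t c) = c)
    (n : ℕ) (ρ : Γ₀ →* Matrix.unitaryGroup (Fin n) ℂ) :
    (∀ g : Γ, inducedRep Γ₀ t ρ g ∈ Matrix.unitaryGroup ((Γ ⧸ Γ₀) × Fin n) ℂ) ∧
    inducedRep Γ₀ t ρ 1 = 1 ∧
    (∀ g h : Γ, inducedRep Γ₀ t ρ (g * h) = inducedRep Γ₀ t ρ g * inducedRep Γ₀ t ρ h) := by
  refine ⟨fun g => ?_, inducedRep_one Γ₀ t ht ρ, inducedRep_mul Γ₀ t ht ρ⟩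
  rw [Matrix.mem_unitaryGroup_iff, ← inducedRep_star Γ₀ t ht ρ g,
    ← inducedRep_mul Γ₀ t ht ρ, mul_inv_cancel, inducedRep_one Γ₀ t ht ρ]
end

section
/- Let Γ be an infinite, finitely generated, simple group. Then every group homomorphism ρ : Γ → U(n) into a finite-dimensional unitary group is trivial, i.e. ρ(g) = 1 for all g ∈ Γ. -/
open Matrix

/-- ℤ is a Jacobson ring. -/
lemma aux_int_isJacobsonRing : IsJacobsonRing ℤ := by
  rw [isJacobsonRing_iff_prime_eq]
  intro P hP
  by_cases hbot : P = ⊥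
  · subst hbot
    refine le_antisymm (fun x hx => ?_) Ideal.le_jacobson
    rw [Ideal.mem_jacobson_bot] at hx
    have h1 := hx 1
    have h2 := hx (-1)
    rw [Int.isUnit_iff] at h1 h2
    rw [mul_one] at h1
    rw [Ideal.mem_bot]
    rcases h1 with h1 | h1
    · omega
    · have hx2 : x = -2 := by omega
      subst hx2
      norm_num at h2
  · haveI := hP
    haveI : P.IsMaximal := IsPrime.to_maximal_ideal hbot
    exact Ideal.jacobson_eq_self_of_isMaximal

/-- The quotient of a finitely generated ℤ-algebra by a maximal ideal is finite. -/
lemma aux_finite_quotient (A : Type*) [CommRing A] [Algebra.FiniteType ℤ A]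
    (m : Ideal A) [m.IsMaximal] : Finite (A ⧸ m) := by
  haveI : IsJacobsonRing ℤ := aux_int_isJacobsonRing
  haveI : Algebra.FiniteType ℤ (A ⧸ m) :=
    Algebra.FiniteType.of_surjective
      (Ideal.Quotient.mk m).toIntAlgHom Ideal.Quotient.mk_surjective
  letI : Field (A ⧸ m) := Ideal.Quotient.field m
  haveI hFfin : Module.Finite ℤ (A ⧸ m) :=
    finite_of_finite_type_of_isJacobsonRing ℤ (A ⧸ m)
  obtain ⟨p, hp⟩ := CharP.exists (A ⧸ m)
  rcases CharP.char_is_prime_or_zero (A ⧸ m) p with hpp | hp0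
  · haveI : NeZero p := ⟨hpp.ne_zero⟩
    letI : Algebra (ZMod p) (A ⧸ m) := ZMod.algebra (A ⧸ m) p
    haveI : Module.Finite (ZMod p) (A ⧸ m) :=
      Module.Finite.of_restrictScalars_finite ℤ (ZMod p) (A ⧸ m)
    exact Module.finite_of_finite (ZMod p)
  · subst hp0
    haveI : CharZero (A ⧸ m) := CharP.charP_to_charZero (A ⧸ m)
    haveI : Algebra.IsIntegral ℤ (A ⧸ m) := Algebra.IsIntegral.of_finite ℤ (A ⧸ m)
    haveI : IsScalarTower ℤ ℚ (A ⧸ m) :=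
      IsScalarTower.of_algebraMap_eq fun x => by
        simp [eq_intCast, map_intCast]
    have h2 : IsIntegral ℤ (algebraMap ℚ (A ⧸ m) (1 / 2)) :=
      Algebra.IsIntegral.isIntegral _
    have h3 : IsIntegral ℤ ((1 : ℚ) / 2) := by
      rwa [isIntegral_algebraMap_iff (algebraMap ℚ (A ⧸ m)).injective] at h2
    obtain ⟨y, hy⟩ := IsIntegrallyClosed.isIntegral_iff.mp h3
    exfalso
    have hyq : (y : ℚ) = 1 / 2 := by exact_mod_cast hy
    have h4 : (2 * y : ℚ) = 1 := by rw [mul_comm, hyq]; norm_num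
    have h5 : (2 * y : ℤ) = 1 := by exact_mod_cast h4
    omega

/-- A finitely generated ℤ-algebra which is a domain has, for any nonzero element,
a maximal ideal avoiding it with finite residue field. -/
lemma aux_finite_residue (A : Type*) [CommRing A] [IsDomain A] [Algebra.FiniteType ℤ A]
    {a : A} (ha : a ≠ 0) :
    ∃ m : Ideal A, ∃ _ : m.IsMaximal, a ∉ m ∧ Finite (A ⧸ m) := by
  haveI : IsJacobsonRing ℤ := aux_int_isJacobsonRing
  haveI : IsJacobsonRing A := isJacobsonRing_of_finiteType (A := ℤ)
  have hbot : ((⊥ : Ideal A)).jacobson = ⊥ :=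
    (‹IsJacobsonRing A›).out' _ Ideal.bot_prime.isRadical
  have hmem : a ∉ ((⊥ : Ideal A)).jacobson := by
    rw [hbot]
    simpa [Ideal.mem_bot] using ha
  rw [Ideal.jacobson, Ideal.mem_sInf] at hmem
  push_neg at hmem
  obtain ⟨m, ⟨-, hmmax⟩, ham⟩ := hmem
  haveI := hmmax
  exact ⟨m, hmmax, ham, aux_finite_quotient A m⟩

/-- An infinite simple group admits no homomorphism to a finite group that is
nontrivial somewhere. -/
lemma aux_simple_infinite_no_finite {Γ : Type*} [Group Γ] [Infinite Γ]
    (hsimple : IsSimpleGroup Γ) {M : Type*} [Group M] [Finite M]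
    (f : Γ →* M) {g : Γ} (hg : f g ≠ 1) : False := by
  rcases hsimple.eq_bot_or_eq_top_of_normal f.ker f.normal_ker with h | h
  · have hinj : Function.Injective f := (MonoidHom.ker_eq_bot_iff f).mp h
    haveI : Finite Γ := Finite.of_injective f hinj
    exact not_finite Γ
  · refine hg ?_
    have : g ∈ f.ker := h.symm ▸ Subgroup.mem_top g
    exact this

/-- An infinite simple group admits no matrix "representation" over a domain that is a
finitely generated ℤ-algebra which is nontrivial somewhere. -/
lemma aux_no_nontrivial_rep {Γ : Type*} [Group Γ] [Infinite Γ]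
    (hsimple : IsSimpleGroup Γ) {A : Type*} [CommRing A] [IsDomain A]
    [Algebra.FiniteType ℤ A] {n : ℕ}
    (e : Γ →* Matrix (Fin n) (Fin n) A) {g : Γ} (hg : e g ≠ 1) : False := by
  obtain ⟨i, j, hij⟩ : ∃ i j, e g i j ≠ (1 : Matrix (Fin n) (Fin n) A) i j := by
    by_contra h
    push_neg at h
    exact hg (Matrix.ext fun i j => h i j)
  have hane : e g i j - (1 : Matrix (Fin n) (Fin n) A) i j ≠ 0 := sub_ne_zero.mpr hij
  obtain ⟨m, hmmax, ham, hmfin⟩ := aux_finite_residue A hane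
  haveI := hmmax
  haveI := hmfin
  let ψ : Γ →* Matrix (Fin n) (Fin n) (A ⧸ m) :=
    ((Ideal.Quotient.mk m).mapMatrix.toMonoidHom).comp e
  have hψg : ψ g ≠ 1 := by
    intro h
    apply ham
    rw [← Ideal.Quotient.eq_zero_iff_mem, map_sub]
    have h1 : (Ideal.Quotient.mk m) (e g i j) = (1 : Matrix (Fin n) (Fin n) (A ⧸ m)) i j := by
      have h0 : ψ g i j = (1 : Matrix (Fin n) (Fin n) (A ⧸ m)) i j := by rw [h]
      exact h0
    have h2 : (Ideal.Quotient.mk m) ((1 : Matrix (Fin n) (Fin n) A) i j)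
        = (1 : Matrix (Fin n) (Fin n) (A ⧸ m)) i j := by
      by_cases hij' : i = j <;> simp [Matrix.one_apply, hij']
    rw [h1, h2, sub_self]
  have hψ'g : ψ.toHomUnits g ≠ 1 := by
    intro h
    apply hψg
    have hcoe : ((ψ.toHomUnits g : (Matrix (Fin n) (Fin n) (A ⧸ m))ˣ) :
        Matrix (Fin n) (Fin n) (A ⧸ m)) = ψ g := MonoidHom.coe_toHomUnits ψ g
    rw [h] at hcoe
    exact hcoe.symm
  exact aux_simple_infinite_no_finite hsimple ψ.toHomUnits hψ'g

set_option maxHeartbeats 1000000 in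
set_option synthInstance.maxHeartbeats 400000 in
/-- Every finite-dimensional unitary representation of an infinite, finitely
generated, simple group is trivial. -/
theorem simple_group_trivial_unitary_reps (Γ : Type*) [Group Γ] [Infinite Γ]
    (hfg : Group.FG Γ) (hsimple : IsSimpleGroup Γ) (n : ℕ)
    (ρ : Γ →* Matrix.unitaryGroup (Fin n) ℂ) :
    ∀ g : Γ, ρ g = 1 := by
  by_contra hcon
  push_neg at hcon
  obtain ⟨g, hg⟩ := hcon
  -- generators
  obtain ⟨S, hScl, hSfin⟩ := Group.fg_iff.mp hfg
  -- entries of images of generators, plus conjugates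
  set E : Set ℂ := ⋃ s ∈ S, Set.range (fun p : Fin n × Fin n =>
    (ρ s : Matrix (Fin n) (Fin n) ℂ) p.1 p.2) with hE
  have hEfin : E.Finite := hSfin.biUnion (fun s _ => Set.finite_range _)
  set T : Set ℂ := E ∪ (starRingEnd ℂ) '' E with hT
  have hTfin : T.Finite := hEfin.union (hEfin.image _)
  have hTconj : (starRingEnd ℂ) '' T = T := by
    rw [hT, Set.image_union, Set.image_image]
    have h : (fun x => (starRingEnd ℂ) ((starRingEnd ℂ) x)) = id := by
      funext x; simp
    rw [h, Set.image_id, Set.union_comm]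
  set A : Subalgebra ℤ ℂ := Algebra.adjoin ℤ T with hA
  -- A is closed under conjugation
  have hAconj : ∀ x ∈ A, (starRingEnd ℂ) x ∈ A := by
    intro x hx
    have himg : A.map (starRingEnd ℂ).toIntAlgHom = A := by
      rw [hA, AlgHom.map_adjoin,
        show ⇑(starRingEnd ℂ).toIntAlgHom = ⇑(starRingEnd ℂ) from rfl, hTconj]
    rw [← himg]
    exact ⟨x, hx, rfl⟩
  -- all entries of all images lie in A
  have hent : ∀ γ : Γ, ∀ i j, (ρ γ : Matrix (Fin n) (Fin n) ℂ) i j ∈ A := by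
    intro γ
    have hγ : γ ∈ Subgroup.closure S := hScl ▸ Subgroup.mem_top γ
    induction hγ using Subgroup.closure_induction with
    | mem s hs =>
      intro i j
      refine Algebra.subset_adjoin (Set.mem_union_left _ ?_)
      exact Set.mem_biUnion hs ⟨(i, j), rfl⟩
    | one =>
      intro i j
      rw [_root_.map_one ρ]
      have h : ((1 : Matrix.unitaryGroup (Fin n) ℂ) : Matrix (Fin n) (Fin n) ℂ) i j
          = if i = j then (1 : ℂ) else 0 := by
        simp [Matrix.one_apply]
      rw [h]
      by_cases hij : i = j <;> simp [hij, Subalgebra.one_mem, Subalgebra.zero_mem]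
    | mul a b _ _ ha hb =>
      intro i j
      rw [_root_.map_mul ρ]
      have h : ((ρ a * ρ b : Matrix.unitaryGroup (Fin n) ℂ) :
          Matrix (Fin n) (Fin n) ℂ) i j
          = ∑ k, (ρ a : Matrix (Fin n) (Fin n) ℂ) i k *
            (ρ b : Matrix (Fin n) (Fin n) ℂ) k j := by
        simp [Matrix.mul_apply]
      rw [h]
      exact A.sum_mem fun k _ => A.mul_mem (ha i k) (hb k j)
    | inv a _ ha =>
      intro i j
      rw [map_inv]
      have h : ((ρ a)⁻¹ : Matrix.unitaryGroup (Fin n) ℂ).1 i j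
          = (starRingEnd ℂ) ((ρ a : Matrix (Fin n) (Fin n) ℂ) j i) := rfl
      rw [h]
      exact hAconj _ (ha j i)
  -- A is a finitely generated ℤ-algebra
  have hAfg : A.FG := ⟨hTfin.toFinset, by rw [hTfin.coe_toFinset, ← hA]⟩
  clear_value A
  clear hA hE hT hTconj hTfin hEfin
  haveI hAft : Algebra.FiniteType ℤ A := (Subalgebra.fg_iff_finiteType A).mp hAfg
  -- the matrix over A
  set e : Γ → Matrix (Fin n) (Fin n) A :=
    fun γ i j => ⟨(ρ γ : Matrix (Fin n) (Fin n) ℂ) i j, hent γ i j⟩ with he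
  have hmape : ∀ γ, (A.val.toRingHom.mapMatrix (e γ) : Matrix (Fin n) (Fin n) ℂ)
      = (ρ γ : Matrix (Fin n) (Fin n) ℂ) := fun γ => rfl
  have hmapinj : Function.Injective
      (A.val.toRingHom.mapMatrix : Matrix (Fin n) (Fin n) A → Matrix (Fin n) (Fin n) ℂ) := by
    intro x y hxy
    refine Matrix.ext fun i j => Subtype.ext ?_
    exact congrFun (congrFun hxy i) j
  have hone : ∀ i j : Fin n, (((1 : Matrix (Fin n) (Fin n) A) i j : A) : ℂ)
      = (1 : Matrix (Fin n) (Fin n) ℂ) i j := by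
    intro i j
    by_cases h : i = j <;> simp [Matrix.one_apply, h]
  have he1 : e 1 = 1 := by
    refine Matrix.ext fun i j => Subtype.ext ?_
    show (ρ (1 : Γ) : Matrix (Fin n) (Fin n) ℂ) i j
      = (((1 : Matrix (Fin n) (Fin n) A) i j : A) : ℂ)
    rw [_root_.map_one ρ, hone]
    simp [Matrix.one_apply]
  have hemul : ∀ a b, e (a * b) = e a * e b := by
    intro a b
    apply hmapinj
    rw [_root_.map_mul, hmape, hmape, hmape, _root_.map_mul ρ]
    rfl
  -- package as a monoid hom
  let eψ : Γ →* Matrix (Fin n) (Fin n) A :=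
    { toFun := e, map_one' := he1, map_mul' := hemul }
  have hgmat : (ρ g : Matrix (Fin n) (Fin n) ℂ) ≠ 1 := fun h => hg (Subtype.ext h)
  have hge : eψ g ≠ 1 := by
    intro h
    apply hgmat
    have h1 : A.val.toRingHom.mapMatrix (e g) = A.val.toRingHom.mapMatrix 1 := by
      show A.val.toRingHom.mapMatrix (eψ g) = _
      rw [h]
    rw [hmape, _root_.map_one] at h1
    exact h1
  exact aux_no_nontrivial_rep hsimple eψ hge
end

section
/- Every finitely generated linear group is residually finite: if K is a field and Γ is a finitely generated subgroup of GL_n(K), then for every element g ∈ Γ with g ≠ 1 there exist a finite group Q and a group homomorphism φ : Γ → Q with φ(g) ≠ 1. -/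
/-- `ℤ` is a Jacobson ring. -/
instance malcev_isJacobsonRing_int : IsJacobsonRing ℤ := by
  rw [isJacobsonRing_iff_prime_eq]
  intro P hP
  by_cases hbot : P = ⊥
  · subst hbot
    refine eq_bot_iff.mpr fun x hx => ?_
    rw [Ideal.mem_jacobson_bot] at hx
    rw [Submodule.mem_bot]
    have h1 := Int.isUnit_iff.mp (hx 1)
    have h2 := Int.isUnit_iff.mp (hx (-1))
    rcases h1 with h1 | h1 <;> rcases h2 with h2 | h2 <;> omega
  · haveI := IsPrime.to_maximal_ideal hbot
    exact Ideal.jacobson_eq_self_of_isMaximal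

/-- A field that is a finitely generated ring (`ℤ`-algebra of finite type) is finite. -/
lemma malcev_aux_finite (F : Type*) [Field F] [Algebra.FiniteType ℤ F] : Finite F := by
  have hmf : Module.Finite ℤ F := finite_of_finite_type_of_isJacobsonRing ℤ F
  have hint : Algebra.IsIntegral ℤ F := Algebra.IsIntegral.of_finite ℤ F
  obtain ⟨k, hk0, hk⟩ : ∃ k : ℤ, k ≠ 0 ∧ algebraMap ℤ F k = 0 := by
    by_contra h
    push_neg at h
    have hinj : Function.Injective (algebraMap ℤ F) := by
      intro x y hxy
      by_contra hne
      exact h (x - y) (sub_ne_zero.mpr hne) (by rw [map_sub, hxy, sub_self])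
    exact Int.not_isField (isField_of_isIntegral_of_isField hinj (Field.toIsField F))
  apply Module.finite_of_fg_torsion
  intro x
  refine ⟨⟨k, mem_nonZeroDivisors_of_ne_zero hk0⟩, ?_⟩
  show k • x = 0
  have hk' : (k : F) = 0 := by rwa [algebraMap_int_eq, eq_intCast] at hk
  rw [zsmul_eq_mul, hk', zero_mul]

/-- Malcev's theorem: every finitely generated linear group is residually
finite.  If `Γ` is a finitely generated subgroup of `GL_n(K)` for a field `K`,
then for every `g ∈ Γ` with `g ≠ 1` there is a homomorphism from `Γ` to a
finite group not killing `g`. -/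
theorem fg_linear_group_residually_finite (K : Type*) [Field K] (n : ℕ)
    (Γ : Subgroup (GL (Fin n) K)) (hfg : Group.FG Γ) :
    ∀ g : Γ, g ≠ 1 →
      ∃ (Q : Type) (_ : Group Q) (_ : Finite Q) (φ : Γ →* Q), φ g ≠ 1 := by
  classical
  intro g hg
  -- the matrix of `g` differs from the identity at some entry
  have hg' : (g : GL (Fin n) K).val ≠ (1 : GL (Fin n) K).val := by
    intro h
    exact hg (Subtype.ext (Units.ext h))
  obtain ⟨i, j, hij⟩ :
      ∃ i j, (g : GL (Fin n) K).val i j ≠ (1 : Matrix (Fin n) (Fin n) K) i j := by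
    by_contra h
    push_neg at h
    exact hg' (by rw [Units.val_one]; ext i j; exact h i j)
  set a : K := (g : GL (Fin n) K).val i j - (1 : Matrix (Fin n) (Fin n) K) i j with ha_def
  have ha : a ≠ 0 := sub_ne_zero.mpr hij
  -- a finite generating set of `Γ` inside `GL`
  obtain ⟨T, hT, hTfin⟩ := (Subgroup.fg_iff Γ).mp ((Group.fg_iff_subgroup_fg Γ).mp hfg)
  -- the entries of the generators, their inverses, and `a⁻¹`
  let ent : GL (Fin n) K → Set K := fun M =>
    (Set.range fun p : Fin n × Fin n => M.val p.1 p.2) ∪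
    (Set.range fun p : Fin n × Fin n => (M⁻¹).val p.1 p.2)
  let E : Set K := insert a⁻¹ (⋃ t ∈ T, ent t)
  have hEfin : E.Finite :=
    (hTfin.biUnion fun t _ => (Set.finite_range _).union (Set.finite_range _)).insert _
  let A : Subalgebra ℤ K := Algebra.adjoin ℤ E
  have hAft : Algebra.FiniteType ℤ A :=
    (Subalgebra.fg_iff_finiteType A).mp (Subalgebra.fg_def.mpr ⟨E, hEfin, rfl⟩)
  -- the subgroup of `GL` of matrices whose entries and inverse entries lie in `A`
  have hone : ∀ i' j' : Fin n, (1 : Matrix (Fin n) (Fin n) K) i' j' ∈ A := by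
    intro i' j'
    rw [Matrix.one_apply]
    split
    · exact A.one_mem
    · exact A.zero_mem
  let H : Subgroup (GL (Fin n) K) :=
  { carrier := {M | (∀ i' j', M.val i' j' ∈ A) ∧ ∀ i' j', (M⁻¹).val i' j' ∈ A}
    one_mem' := ⟨fun i' j' => by rw [Units.val_one]; exact hone i' j',
      fun i' j' => by rw [inv_one, Units.val_one]; exact hone i' j'⟩
    mul_mem' := fun {M N} hM hN =>
      ⟨fun i' j' => by
        rw [Units.val_mul, Matrix.mul_apply]
        exact A.sum_mem fun k _ => A.mul_mem (hM.1 i' k) (hN.1 k j'),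
       fun i' j' => by
        rw [mul_inv_rev, Units.val_mul, Matrix.mul_apply]
        exact A.sum_mem fun k _ => A.mul_mem (hN.2 i' k) (hM.2 k j')⟩
    inv_mem' := fun {M} hM => ⟨hM.2, fun i' j' => by rw [inv_inv]; exact hM.1 i' j'⟩ }
  have hΓH : Γ ≤ H := by
    rw [← hT]
    refine (Subgroup.closure_le H).mpr ?_
    intro t ht
    exact ⟨fun i' j' => Algebra.subset_adjoin
        (Set.mem_insert_of_mem _ (Set.mem_biUnion ht (Or.inl ⟨(i', j'), rfl⟩))),
      fun i' j' => Algebra.subset_adjoin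
        (Set.mem_insert_of_mem _ (Set.mem_biUnion ht (Or.inr ⟨(i', j'), rfl⟩)))⟩
  -- the injective ring hom from matrices over `A` to matrices over `K`
  let ι : Matrix (Fin n) (Fin n) A →+* Matrix (Fin n) (Fin n) K :=
    (A.val.toRingHom).mapMatrix
  have hι : Function.Injective ι := by
    intro M N h
    ext i' j'
    have h' := congrArg (fun P => P i' j') h
    exact h'
  -- the lift of `Γ` to matrices over `A`
  let Mm : Γ → Matrix (Fin n) (Fin n) A := fun γ => fun i' j' =>
    ⟨(γ : GL (Fin n) K).val i' j', (hΓH γ.2).1 i' j'⟩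
  let Nm : Γ → Matrix (Fin n) (Fin n) A := fun γ => fun i' j' =>
    ⟨((γ : GL (Fin n) K)⁻¹).val i' j', (hΓH γ.2).2 i' j'⟩
  have hιM : ∀ γ : Γ, ι (Mm γ) = (γ : GL (Fin n) K).val := fun γ => by ext i' j'; rfl
  have hιN : ∀ γ : Γ, ι (Nm γ) = ((γ : GL (Fin n) K)⁻¹).val := fun γ => by ext i' j'; rfl
  let ψ : Γ →* (Matrix (Fin n) (Fin n) A)ˣ :=
  { toFun := fun γ => ⟨Mm γ, Nm γ,
      hι (by simp only [map_mul, map_one, hιM, hιN, Units.mul_inv]),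
      hι (by simp only [map_mul, map_one, hιM, hιN, Units.inv_mul])⟩
    map_one' := Units.ext (hι (by
      simp only [hιM, map_one, OneMemClass.coe_one, Units.val_one]))
    map_mul' := fun γ δ => Units.ext (hι (by
      simp only [hιM, map_mul, MulMemClass.coe_mul, Units.val_mul])) }
  -- a maximal ideal of `A` and the finite residue field
  haveI : Nontrivial A := ⟨⟨0, 1, fun h => zero_ne_one (congrArg Subtype.val h)⟩⟩
  haveI := hAft
  haveI : IsJacobsonRing A := isJacobsonRing_of_finiteType (A := ℤ) (B := A)
  obtain ⟨m, hm⟩ := Ideal.exists_maximal A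
  letI : Field (A ⧸ m) := Ideal.Quotient.field m
  haveI : Algebra.FiniteType ℤ (A ⧸ m) :=
    Algebra.FiniteType.of_surjective (Ideal.Quotient.mkₐ ℤ m)
      (Ideal.Quotient.mkₐ_surjective ℤ m)
  haveI : Finite (A ⧸ m) := @malcev_aux_finite (A ⧸ m) _ (by convert this; rfl; exact Subsingleton.elim _ _)
  -- the finite group of units of matrices over the residue field
  haveI : Finite (Matrix (Fin n) (Fin n) (A ⧸ m))ˣ := inferInstance
  let ρ : Matrix (Fin n) (Fin n) A →* Matrix (Fin n) (Fin n) (A ⧸ m) :=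
    ((Ideal.Quotient.mk m).mapMatrix : Matrix (Fin n) (Fin n) A →+*
      Matrix (Fin n) (Fin n) (A ⧸ m)).toMonoidHom
  let φ0 : Γ →* (Matrix (Fin n) (Fin n) (A ⧸ m))ˣ := (Units.map ρ).comp ψ
  have hφ0 : φ0 g ≠ 1 := by
    intro h
    have h1 : Ideal.Quotient.mk m (Mm g i j) =
        Ideal.Quotient.mk m ((1 : Matrix (Fin n) (Fin n) A) i j) := by
      have h' : (φ0 g).val i j = (1 : (Matrix (Fin n) (Fin n) (A ⧸ m))ˣ).val i j :=
        congrArg (fun u : (Matrix (Fin n) (Fin n) (A ⧸ m))ˣ => u.val i j) h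
      have hl : (φ0 g).val i j = Ideal.Quotient.mk m (Mm g i j) := rfl
      have hr : (1 : (Matrix (Fin n) (Fin n) (A ⧸ m))ˣ).val i j =
          Ideal.Quotient.mk m ((1 : Matrix (Fin n) (Fin n) A) i j) := by
        rw [Units.val_one, Matrix.one_apply, Matrix.one_apply]
        split <;> simp
      rw [hl, hr] at h'
      exact h'
    have hmem : Mm g i j - (1 : Matrix (Fin n) (Fin n) A) i j ∈ m :=
      Ideal.Quotient.eq.mp h1
    have hval : ((Mm g i j - (1 : Matrix (Fin n) (Fin n) A) i j : A) : K) = a := by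
      rw [ha_def]
      have : ((1 : Matrix (Fin n) (Fin n) A) i j : K) =
          (1 : Matrix (Fin n) (Fin n) K) i j := by
        rw [Matrix.one_apply, Matrix.one_apply]
        split <;> simp
      rw [AddSubgroupClass.coe_sub, this]
    have hunit : IsUnit (Mm g i j - (1 : Matrix (Fin n) (Fin n) A) i j) := by
      refine IsUnit.of_mul_eq_one ⟨a⁻¹, Algebra.subset_adjoin (Set.mem_insert _ _)⟩ ?_
      refine Subtype.ext ?_
      rw [MulMemClass.coe_mul, hval]
      exact mul_inv_cancel₀ ha
    exact hm.ne_top (Ideal.eq_top_of_isUnit_mem m hmem hunit)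
  -- transfer to a group in `Type 0`
  letI : Fintype (Matrix (Fin n) (Fin n) (A ⧸ m))ˣ := Fintype.ofFinite _
  haveI : Small.{0} (Matrix (Fin n) (Fin n) (A ⧸ m))ˣ :=
    ⟨⟨Fin (Fintype.card (Matrix (Fin n) (Fin n) (A ⧸ m))ˣ), ⟨Fintype.equivFin _⟩⟩⟩
  let me : Shrink.{0} (Matrix (Fin n) (Fin n) (A ⧸ m))ˣ ≃*
      (Matrix (Fin n) (Fin n) (A ⧸ m))ˣ := Shrink.mulEquiv
  haveI : Finite (Shrink.{0} (Matrix (Fin n) (Fin n) (A ⧸ m))ˣ) :=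
    Finite.of_equiv _ (equivShrink _)
  refine ⟨_, _, inferInstance, me.symm.toMonoidHom.comp φ0, ?_⟩
  intro h
  apply hφ0
  have h2 : me.symm (φ0 g) = me.symm 1 := by
    rw [map_one]
    exact h
  exact me.symm.injective h2
end
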